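/- For the projector π_1 associated to the q-stuffle, applied to a letter y_k one has π_1(y_k) = y_k + Σ_{l≥2} ((-q)^{l-1}/l) Σ_{j_1+...+j_l = k, j_i ≥ 1} y_{j_1} ... y_{j_l}. -/

import Mathlib

open scoped BigOperators

/-- Words over the alphabet `Y = {y_s : s ≥ 1}`: a word is a list of positive integers. -/
abbrev Word : Type := List ℕ+

/-- The weight of a word `y_{i_1} ⋯ y_{i_r}` is `i_1 + ⋯ + i_r`. -/
def weight (w : Word) : ℕ := (w.map (fun s => (s : ℕ))).sum

/-- Noncommutative polynomials over `R` on the alphabet `Y`. -/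
abbrev NCPoly (R : Type) [CommRing R] : Type := Word →₀ R

variable {R : Type} [CommRing R]

/-- The `q`-stuffle product of two words, as a polynomial. -/
noncomputable def stuf (q : R) : Word → Word → NCPoly R
  | [], v => Finsupp.single v 1
  | u, [] => Finsupp.single u 1
  | s :: u, t :: v =>
      Finsupp.mapDomain (fun w => s :: w) (stuf q u (t :: v)) +
      Finsupp.mapDomain (fun w => t :: w) (stuf q (s :: u) v) +
      q • Finsupp.mapDomain (fun w => (s + t) :: w) (stuf q u v)
  termination_by u v => u.length + v.length
  decreasing_by all_goals (simp only [List.length_cons]; omega)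

/-- Bilinear extension of the `q`-stuffle product to polynomials. -/
noncomputable def stufP (q : R) (P Q : NCPoly R) : NCPoly R :=
  P.sum fun u a => Q.sum fun v b => (a * b) • stuf q u v

/-- Concatenation product of polynomials. -/
noncomputable def concP (P Q : NCPoly R) : NCPoly R :=
  P.sum fun u a => Q.sum fun v b => Finsupp.single (u ++ v) (a * b)

/-- Concatenation product of a list of polynomials. -/
noncomputable def concList : List (NCPoly R) → NCPoly R
  | [] => Finsupp.single [] 1
  | P :: L => concP P (concList L)

/-- `q`-stuffle product of a list of words. -/
noncomputable def stufList (q : R) : List Word → NCPoly R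
  | [] => Finsupp.single [] 1
  | u :: L => stufP q (Finsupp.single u 1) (stufList q L)

/-- A formal power series over `Y` is a function `Word → R`; `S w = ⟨S, w⟩`. -/
def unitS : Word → R := fun w => if w = [] then 1 else 0

/-- Pairing `⟨S, P⟩ = Σ_w ⟨S,w⟩⟨P,w⟩` between a series and a polynomial. -/
noncomputable def pairS (S : Word → R) (P : NCPoly R) : R := P.sum fun w c => c * S w

/-- Pairing between two polynomials. -/
noncomputable def pairP (P Q : NCPoly R) : R := Q.sum fun w c => c * P w

/-- The finite set of all words of weight `n`. -/
noncomputable def wordsOfWeight : ℕ → Finset Word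
  | 0 => {[]}
  | n + 1 =>
      (Finset.range (n + 1)).attach.biUnion fun i =>
        (wordsOfWeight i.1).image fun w => (n + 1 - i.1).toPNat' :: w
  termination_by n => n
  decreasing_by exact Finset.mem_range.mp i.2

/-- All words of weight at most `n`. -/
noncomputable def wordsUpTo (n : ℕ) : Finset Word := (Finset.range (n + 1)).biUnion wordsOfWeight

/-- The `q`-stuffle product of two formal power series (coefficient-wise, the sum
is finite since the `q`-stuffle preserves weight). -/
noncomputable def stufS (q : R) (S T : Word → R) : Word → R :=
  fun w => ∑ u ∈ wordsUpTo (weight w), ∑ v ∈ wordsUpTo (weight w),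
    S u * T v * (stuf q u v) w

/-- `q`-stuffle product of a list of series. -/
noncomputable def stufSList (q : R) (L : List (Word → R)) : Word → R :=
  L.foldr (stufS q) unitS

/-- All ways of writing a word as a concatenation of nonempty words. -/
noncomputable def splits : Word → Finset (List Word)
  | [] => {[]}
  | a :: v =>
      (Finset.range (v.length + 1)).attach.biUnion fun i =>
        (splits (v.drop i.1)).image fun L => (a :: v.take i.1) :: L
  termination_by w => w.length
  decreasing_by simp [List.length_drop]

/-- Lists of length `n` with entries in the finite set `s`. -/
noncomputable def tuples (s : Finset Word) : ℕ → Finset (List Word)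
  | 0 => {[]}
  | n + 1 => s.biUnion fun u => (tuples s n).image fun L => u :: L

/-- The Eulerian-type projector `π₁` associated to the `q`-stuffle:
`π₁(w) = Σ_{k≥1} ((-1)^{k-1}/k) Σ_{u_1,…,u_k ∈ Y⁺} ⟨w | u_1 ⊛_q ⋯ ⊛_q u_k⟩ u_1⋯u_k`. -/
noncomputable def qpi1 [Algebra ℚ R] (q : R) (w : Word) : NCPoly R :=
  ∑ v ∈ wordsUpTo (weight w),
    Finsupp.single v
      (∑ n ∈ Finset.Icc 1 (weight w),
        ((-1 : ℚ) ^ (n - 1) / n) •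
          ∑ L ∈ (splits v).filter (fun L => L.length = n), (stufList q L) w)

/-- The adjoint projector `π̌₁`:
`π̌₁(w) = Σ_{k≥1} ((-1)^{k-1}/k) Σ_{u_1⋯u_k = w, u_i ∈ Y⁺} u_1 ⊛_q ⋯ ⊛_q u_k`. -/
noncomputable def qpi1Check [Algebra ℚ R] (q : R) (w : Word) : NCPoly R :=
  ∑ L ∈ splits w, ((-1 : ℚ) ^ (L.length - 1) / (L.length : ℚ)) • stufList q L

/-- `S` is primitive for the coproduct dual to the `q`-stuffle:
`Δ S = S ⊗ 1 + 1 ⊗ S`, read off on the coefficient at `u ⊗ v`. -/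
def IsPrimitive (q : R) (S : Word → R) : Prop :=
  ∀ u v : Word, pairS S (stuf q u v) =
    (if v = [] then S u else 0) + (if u = [] then S v else 0)

/-- `S` is group-like for the coproduct dual to the `q`-stuffle: `Δ S = S ⊗ S`. -/
def IsGroupLike (q : R) (S : Word → R) : Prop :=
  ∀ u v : Word, pairS S (stuf q u v) = S u * S v

/-- Concatenation (Cauchy) product of two series. -/
noncomputable def concS (S T : Word → R) : Word → R :=
  fun w => ∑ i ∈ Finset.range (w.length + 1), S (w.take i) * T (w.drop i)

/-- Concatenation powers of a series. -/
noncomputable def concPow (S : Word → R) : ℕ → Word → R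
  | 0 => unitS
  | n + 1 => concS S (concPow S n)

/-- Formal logarithm `log S = Σ_{n≥1} (-1)^{n-1} (S-1)^n / n` (for `S` with constant term 1,
the sum at a word `w` has at most `|w|` nonzero terms). -/
noncomputable def logS [Algebra ℚ R] (S : Word → R) : Word → R :=
  fun w => ∑ n ∈ Finset.Icc 1 w.length,
    ((-1 : ℚ) ^ (n - 1) / n) • concPow (S - unitS) n w

/-- The product on `R⟨⟨Y⟩⟩ ⊗^ R⟨⟨Y⟩⟩` where the left factor is multiplied by `⊛_q`
and the right factor by concatenation; a tensor is a function `Word → Word → R`. -/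
noncomputable def tmul (q : R) (A B : Word → Word → R) : Word → Word → R :=
  fun w w' => ∑ i ∈ Finset.range (w'.length + 1),
    stufS q (fun u => A u (w'.take i)) (fun u => B u (w'.drop i)) w

/-- The unit `1 ⊗ 1` of the tensor algebra. -/
def unitT : Word → Word → R := fun u v => if u = [] ∧ v = [] then 1 else 0

/-- Powers in the tensor algebra. -/
noncomputable def tpow (q : R) (A : Word → Word → R) : ℕ → Word → Word → R
  | 0 => unitT
  | n + 1 => tmul q A (tpow q A n)

/-- Formal logarithm in the tensor algebra. -/
noncomputable def logT [Algebra ℚ R] (q : R) (A : Word → Word → R) : Word → Word → R :=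
  fun w w' => ∑ n ∈ Finset.Icc 1 w'.length,
    ((-1 : ℚ) ^ (n - 1) / n) • tpow q (A - unitT) n w w'

/-- The diagonal series `D_Y = Σ_w w ⊗ w`. -/
def diagT : Word → Word → R := fun u v => if u = v then 1 else 0

/-- Order on words: lexicographic extension of the order `y_1 > y_2 > ⋯` on letters
(`wlt u v` means `u < v`). -/
def wlt (u v : Word) : Prop := List.Lex (fun a b : ℕ+ => b < a) u v

/-- A word is Lyndon if it is nonempty and strictly smaller than each of its proper suffixes. -/
def IsLyndon (w : Word) : Prop :=
  w ≠ [] ∧ ∀ i, 0 < i → i < w.length → wlt w (w.drop i)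

/-- Index of the standard factorization of a Lyndon word: the right factor is the
longest proper Lyndon suffix. -/
noncomputable def stdIdx (l : Word) : ℕ :=
  sInf {i | 0 < i ∧ i < l.length ∧ IsLyndon (l.drop i)}

/-- The family `Π_l`, for `l` a Lyndon word: `Π_{y_k} = π₁(y_k)`, and
`Π_l = [Π_s, Π_r]` for the standard factorization `l = (s, r)`. -/
noncomputable def PiL [Algebra ℚ R] (q : R) : Word → NCPoly R
  | [] => Finsupp.single [] 1
  | [s] => qpi1 q [s]
  | a :: b :: w =>
      if h : 0 < stdIdx (a :: b :: w) ∧ stdIdx (a :: b :: w) < (a :: b :: w).length then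
        concP (PiL q ((a :: b :: w).take (stdIdx (a :: b :: w))))
              (PiL q ((a :: b :: w).drop (stdIdx (a :: b :: w)))) -
        concP (PiL q ((a :: b :: w).drop (stdIdx (a :: b :: w))))
              (PiL q ((a :: b :: w).take (stdIdx (a :: b :: w))))
      else 0
  termination_by w => w.length
  decreasing_by all_goals (simp only [List.length_take, List.length_drop, List.length_cons] at h ⊢; omega)

/-- The Lyndon factorization of a word into a nonincreasing product of Lyndon words
(repeatedly take the longest Lyndon prefix). -/
noncomputable def lynFact : Word → List Word
  | [] => []
  | a :: w =>
      (a :: w).take (sSup {i | i ≤ w.length ∧ IsLyndon ((a :: w).take (i + 1))} + 1) ::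
      lynFact ((a :: w).drop (sSup {i | i ≤ w.length ∧ IsLyndon ((a :: w).take (i + 1))} + 1))
  termination_by w => w.length
  decreasing_by simp only [List.length_drop, List.length_cons]; omega

/-- The PBW-type basis: `Π_w = Π_{l_1} ⋯ Π_{l_n}` for the Lyndon factorization
`w = l_1 ⋯ l_n`, `l_1 ≥ ⋯ ≥ l_n`. -/
noncomputable def PiW [Algebra ℚ R] (q : R) (w : Word) : NCPoly R :=
  concList ((lynFact w).map (PiL q))

/-! ### Auxiliary lemmas -/

section Aux

lemma stuf_nil_left (q : R) (v : Word) : stuf q [] v = Finsupp.single v 1 := by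
  cases v <;> simp [stuf]

lemma stuf_nil_right (q : R) (u : Word) : stuf q u [] = Finsupp.single u 1 := by
  cases u <;> simp [stuf]

lemma stuf_cons (q : R) (a b : ℕ+) (u v : Word) : stuf q (a::u) (b::v) =
      Finsupp.mapDomain (fun w => a :: w) (stuf q u (b :: v)) +
      Finsupp.mapDomain (fun w => b :: w) (stuf q (a :: u) v) +
      q • Finsupp.mapDomain (fun w => (a + b) :: w) (stuf q u v) := by
  rw [stuf]

lemma mapDomain_cons_apply_nil (a : ℕ+) (P : NCPoly R) :
    (Finsupp.mapDomain (fun w => a :: w) P) [] = 0 := by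
  apply Finsupp.mapDomain_notin_range
  rintro ⟨w, hw⟩
  simp at hw

lemma mapDomain_cons_apply_cons (a b : ℕ+) (P : NCPoly R) (w : Word) :
    (Finsupp.mapDomain (fun w => a :: w) P) (b :: w) = if b = a then P w else 0 := by
  rcases eq_or_ne b a with rfl | hba
  · rw [if_pos rfl]
    exact Finsupp.mapDomain_apply (fun _ _ h => List.tail_eq_of_cons_eq h) P w
  · rw [if_neg hba]
    apply Finsupp.mapDomain_notin_range
    rintro ⟨w', hw'⟩
    exact hba (List.head_eq_of_cons_eq hw'.symm)

lemma stuf_apply_nil (q : R) : ∀ u v : Word,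
    (stuf q u v) [] = if u = [] ∧ v = [] then 1 else 0
  | [], [] => by simp [stuf_nil_left, Finsupp.single_apply]
  | [], b :: v => by simp [stuf_nil_left, Finsupp.single_apply]
  | a :: u, [] => by simp [stuf_nil_right, Finsupp.single_apply]
  | a :: u, b :: v => by
      rw [stuf_cons]
      simp [mapDomain_cons_apply_nil]

lemma stuf_length_le (q : R) : ∀ (n : ℕ) (u v w : Word), u.length + v.length = n →
    (stuf q u v) w ≠ 0 → u.length ≤ w.length ∧ v.length ≤ w.length := by
  intro n
  induction n using Nat.strong_induction_on with
  | _ n ih =>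
    intro u v w hn h
    match u, v with
    | [], v =>
      rw [stuf_nil_left, Finsupp.single_apply] at h
      split at h
      · subst ‹v = w›; simp
      · simp at h
    | a :: u, [] =>
      rw [stuf_nil_right, Finsupp.single_apply] at h
      split at h
      · subst ‹a :: u = w›; simp
      · simp at h
    | a :: u, b :: v =>
      rw [stuf_cons] at h
      simp only [Finsupp.add_apply, Finsupp.smul_apply] at h
      have h3 : (Finsupp.mapDomain (fun w => a :: w) (stuf q u (b :: v))) w ≠ 0 ∨
          (Finsupp.mapDomain (fun w => b :: w) (stuf q (a :: u) v)) w ≠ 0 ∨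
          q • (Finsupp.mapDomain (fun w => (a + b) :: w) (stuf q u v)) w ≠ 0 := by
        by_contra hc
        push_neg at hc
        rw [hc.1, hc.2.1, hc.2.2] at h
        simp at h
      have key : ∀ (c : ℕ+) (P : NCPoly R), (Finsupp.mapDomain (fun w => c :: w) P) w ≠ 0 →
          ∃ w', w = c :: w' ∧ P w' ≠ 0 := by
        intro c P hP
        have hw : w ∈ (Finsupp.mapDomain (fun w => c :: w) P).support :=
          Finsupp.mem_support_iff.2 hP
        have := Finsupp.mapDomain_support hw
        rw [Finset.mem_image] at this
        obtain ⟨w', hw', rfl⟩ := this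
        exact ⟨w', rfl, Finsupp.mem_support_iff.1 hw'⟩
      rcases h3 with h1 | h2 | h3
      · obtain ⟨w', rfl, hP⟩ := key a _ h1
        have := ih (u.length + (b::v).length) (by simp at hn ⊢; omega) u (b::v) w' rfl hP
        simp at this ⊢; omega
      · obtain ⟨w', rfl, hP⟩ := key b _ h2
        have := ih ((a::u).length + v.length) (by simp at hn ⊢; omega) (a::u) v w' rfl hP
        simp at this ⊢; omega
      · have hm : (Finsupp.mapDomain (fun w => (a+b) :: w) (stuf q u v)) w ≠ 0 := by
          intro hz; rw [hz] at h3; simp at h3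
        obtain ⟨w', rfl, hP⟩ := key (a+b) _ hm
        have := ih (u.length + v.length) (by simp at hn ⊢; omega) u v w' rfl hP
        simp at this ⊢; omega

lemma stufP_single_apply (q : R) (u : Word) (P : NCPoly R) (w : Word) :
    (stufP q (Finsupp.single u 1) P) w = P.sum fun v b => b * (stuf q u v) w := by
  unfold stufP
  rw [Finsupp.sum_single_index (by simp)]
  rw [Finsupp.sum_apply]
  apply Finsupp.sum_congr
  intro v _
  simp

lemma stufList_length_le (q : R) : ∀ (L : List Word) (w : Word), (stufList q L) w ≠ 0 →
    ∀ u ∈ L, u.length ≤ w.length := by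
  intro L
  induction L with
  | nil => simp
  | cons u L ih =>
    intro w h u' hu'
    rw [stufList, stufP_single_apply] at h
    obtain ⟨v, hv, hterm⟩ := Finset.exists_ne_zero_of_sum_ne_zero h
    have hstuf : (stuf q u v) w ≠ 0 := fun hz => hterm (by simp [hz])
    have hlen := stuf_length_le q (u.length + v.length) u v w rfl hstuf
    rcases List.mem_cons.mp hu' with rfl | hu'
    · exact hlen.1
    · have hPv : (stufList q L) v ≠ 0 := Finsupp.mem_support_iff.1 hv
      exact le_trans (ih v hPv u' hu') hlen.2

lemma stuf_apply_single (q : R) (a : ℕ+) (v : Word) (s : ℕ+) :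
    (stuf q [a] v) [s] =
      if v = [] ∧ a = s then 1
      else if v = [((s : ℕ) - (a : ℕ)).toPNat'] ∧ (a : ℕ) < (s : ℕ) then q else 0 := by
  cases v with
  | nil =>
    rw [stuf_nil_right, Finsupp.single_apply]
    simp only [List.cons.injEq, and_true]
    by_cases h : a = s
    · subst h; simp
    · simp [h, Ne.symm h]
  | cons b v' =>
    rw [show ([a] : Word) = a :: [] from rfl, stuf_cons]
    simp only [Finsupp.add_apply, Finsupp.smul_apply]
    rw [stuf_nil_left, stuf_nil_left]
    rw [show (Finsupp.mapDomain (fun w => a :: w) (Finsupp.single (b :: v') (1:R))) [s]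
          = if s = a then (Finsupp.single (b :: v') (1:R)) [] else 0 from
        mapDomain_cons_apply_cons a s _ []]
    rw [mapDomain_cons_apply_cons b s _ []]
    rw [mapDomain_cons_apply_cons (a+b) s _ []]
    rw [stuf_apply_nil]
    simp only [Finsupp.single_apply, List.cons_ne_nil, if_false, ite_self,
      reduceCtorEq, and_false, false_and, if_false, mul_ite, mul_one, mul_zero]
    rw [zero_add, zero_add]
    by_cases hc : v' = [] ∧ (s : ℕ) = (a : ℕ) + (b : ℕ)
    · obtain ⟨rfl, hs⟩ := hc
      have hs' : s = a + b := by
        apply PNat.coe_injective; simpa using hs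
      have hlt : (a : ℕ) < (s : ℕ) := by rw [hs]; have := b.pos; omega
      have hb : ((s : ℕ) - (a : ℕ)).toPNat' = b := by
        apply PNat.coe_injective
        rw [PNat.toPNat'_coe (by omega)]
        omega
      simp [hs', hb, hlt]
    · push_neg at hc
      have hR : ¬ ((b :: v' : Word) = [((s:ℕ)-(a:ℕ)).toPNat'] ∧ (a:ℕ) < (s:ℕ)) := by
        rintro ⟨heq, hlt⟩
        rw [List.cons.injEq] at heq
        obtain ⟨hb, hv'⟩ := heq
        have hbn : (b:ℕ) = (s:ℕ)-(a:ℕ) := by rw [hb, PNat.toPNat'_coe (by omega)]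
        exact hc hv' (by omega)
      rw [if_neg hR]
      by_cases hs : s = a + b
      · subst hs
        have hv' : v' ≠ [] := fun h => hc h (by push_cast; ring)
        rw [if_pos rfl, if_neg hv', smul_zero]
      · rw [if_neg hs, smul_zero]

lemma weight_cons (a : ℕ+) (v : Word) : weight (a :: v) = (a : ℕ) + weight v := by
  simp [weight]

lemma weight_pos {v : Word} (hv : v ≠ []) : 0 < weight v := by
  cases v with
  | nil => exact absurd rfl hv
  | cons a v => rw [weight_cons]; have := a.pos; omega

lemma length_le_weight : ∀ v : Word, v.length ≤ weight v := by
  intro v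
  induction v with
  | nil => simp [weight]
  | cons a v ih => rw [weight_cons]; have := a.pos; simp; omega

lemma stufList_letters_apply (q : R) : ∀ (v : Word), v ≠ [] → ∀ s : ℕ+,
    (stufList q (v.map fun a => [a])) [s] =
      if weight v = (s : ℕ) then q ^ (v.length - 1) else 0 := by
  intro v
  induction v with
  | nil => intro h; exact absurd rfl h
  | cons a v ih =>
    intro _ s
    by_cases hv : v = []
    · subst hv
      rw [List.map_cons, List.map_nil, stufList, stufList, stufP_single_apply,
        Finsupp.sum_single_index (by simp), stuf_nil_right]
      simp only [one_mul, Finsupp.single_apply, List.cons.injEq, and_true, weight_cons]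
      by_cases h : a = s
      · subst h; simp [weight]
      · have : (a : ℕ) ≠ (s : ℕ) := fun hc => h (PNat.coe_injective hc)
        simp [h, Ne.symm h, weight, this]
    · rw [List.map_cons, stufList, stufP_single_apply]
      have hP0 : (stufList q (v.map fun a => [a])) [] = 0 := by
        by_contra h0
        obtain ⟨c, v', rfl⟩ : ∃ c v', v = c :: v' := by
          cases v with
          | nil => exact absurd rfl hv
          | cons c v' => exact ⟨c, v', rfl⟩
        have := stufList_length_le q _ _ h0 [c] (by simp)
        simp at this
      rw [Finsupp.sum]
      by_cases hlt : (a : ℕ) < (s : ℕ)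
      · set b : ℕ+ := ((s : ℕ) - (a : ℕ)).toPNat' with hbdef
        have hb : (b : ℕ) = (s : ℕ) - (a : ℕ) := PNat.toPNat'_coe (by omega)
        rw [Finset.sum_eq_single ([b] : Word)]
        · rw [stuf_apply_single]
          have hne : ¬ (([b] : Word) = [] ∧ a = s) := by
            rintro ⟨h, -⟩; simp at h
          rw [if_neg hne, if_pos ⟨rfl, hlt⟩, ih hv b]
          rw [weight_cons]
          have hvlen : 1 ≤ v.length := by
            cases v with
            | nil => exact absurd rfl hv
            | cons c v' => simp
          by_cases hw : weight v = (b : ℕ)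
          · rw [if_pos hw, if_pos (by omega), List.length_cons, ← pow_succ]
            congr 1
            omega
          · rw [if_neg hw, if_neg (by omega), zero_mul]
        · intro w hw hwne
          rw [stuf_apply_single]
          have h1 : ¬ (w = [] ∧ a = s) := by
            rintro ⟨-, rfl⟩; omega
          rw [if_neg h1, if_neg (by rintro ⟨rfl, -⟩; exact hwne rfl), mul_zero]
        · intro hnb
          rw [Finsupp.notMem_support_iff.mp hnb, zero_mul]
      · rw [Finset.sum_eq_zero, eq_comm, if_neg]
        · rw [weight_cons]
          have := weight_pos hv
          omega
        · intro w hw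
          rw [stuf_apply_single]
          by_cases h1 : w = [] ∧ a = s
          · rw [if_pos h1, h1.1, hP0, zero_mul]
          · rw [if_neg h1, if_neg (by rintro ⟨-, h⟩; omega), mul_zero]

lemma splits_nil : splits ([] : Word) = {[]} := by rw [splits.eq_1]

lemma mem_splits_cons (a : ℕ+) (v : Word) (L : List Word) :
    L ∈ splits (a :: v) ↔
      ∃ i ≤ v.length, ∃ L' ∈ splits (v.drop i), L = (a :: v.take i) :: L' := by
  rw [splits.eq_2]
  simp only [Finset.mem_biUnion, Finset.mem_attach, Finset.mem_image, true_and]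
  constructor
  · rintro ⟨⟨i, hi⟩, L', hL', rfl⟩
    exact ⟨i, by simpa using Nat.lt_succ_iff.mp (Finset.mem_range.mp hi), L', hL', rfl⟩
  · rintro ⟨i, hi, L', hL', rfl⟩
    exact ⟨⟨i, Finset.mem_range.mpr (Nat.lt_succ_iff.mpr hi)⟩, L', hL', rfl⟩

lemma splits_spec : ∀ (n : ℕ) (v : Word), v.length ≤ n → ∀ L ∈ splits v,
    L.flatten = v ∧ ∀ u ∈ L, u ≠ [] := by
  intro n
  induction n with
  | zero =>
    intro v hv L hL
    have : v = [] := List.length_eq_zero_iff.mp (Nat.le_zero.mp hv)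
    subst this
    rw [splits_nil, Finset.mem_singleton] at hL
    subst hL
    simp
  | succ n ih =>
    intro v hv L hL
    cases v with
    | nil =>
      rw [splits_nil, Finset.mem_singleton] at hL
      subst hL
      simp
    | cons a v =>
      rw [mem_splits_cons] at hL
      obtain ⟨i, hi, L', hL', rfl⟩ := hL
      have hlen : (v.drop i).length ≤ n := by
        simp only [List.length_cons] at hv
        simp only [List.length_drop]
        omega
      obtain ⟨hjoin, hne⟩ := ih (v.drop i) hlen L' hL'
      constructor
      · simp only [List.flatten, hjoin]
        simp
      · rintro u hu
        rcases List.mem_cons.mp hu with rfl | hu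
        · simp
        · exact hne u hu

lemma letters_mem_splits : ∀ v : Word, (v.map fun a => [a]) ∈ splits v := by
  intro v
  induction v with
  | nil => rw [splits_nil]; simp
  | cons a v ih =>
    rw [mem_splits_cons]
    exact ⟨0, Nat.zero_le _, v.map fun a => [a], by simpa using ih, by simp⟩

lemma eq_letters_of_singletons : ∀ L : List Word, (∀ u ∈ L, u.length = 1) →
    L = L.flatten.map (fun a => [a]) := by
  intro L
  induction L with
  | nil => simp
  | cons u L ih =>
    intro h
    obtain ⟨a, rfl⟩ := List.length_eq_one_iff.mp (h u (by simp))
    have := ih (fun u hu => h u (by simp [hu]))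
    simp only [List.flatten_cons, List.singleton_append, List.map_cons]
    rw [← this]

lemma sum_splits_stufList (q : R) (s : ℕ+) (v : Word) (n : ℕ) (hn : 1 ≤ n) :
    ∑ L ∈ (splits v).filter (fun L => L.length = n), (stufList q L) [s]
      = if v.length = n ∧ weight v = (s : ℕ) then q ^ (n - 1) else 0 := by
  have key : ∀ L ∈ splits v, (stufList q L) [s] ≠ 0 → L = v.map fun a => [a] := by
    intro L hL h0
    obtain ⟨hjoin, hne⟩ := splits_spec v.length v le_rfl L hL
    have hle := stufList_length_le q L [s] h0
    have hsing : ∀ u ∈ L, u.length = 1 := by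
      intro u hu
      have h1 := hle u hu
      have h2 : u ≠ [] := hne u hu
      have : 0 < u.length := List.length_pos_iff.mpr h2
      simp at h1
      omega
    rw [eq_letters_of_singletons L hsing, hjoin]
  by_cases hlen : v.length = n
  · have hv : v ≠ [] := by
      intro h; subst h; simp at hlen; omega
    rw [Finset.sum_eq_single_of_mem (v.map fun a => [a])
        (Finset.mem_filter.mpr ⟨letters_mem_splits v, by simp [hlen]⟩)
        (fun L hL hne => by
          by_contra h0
          exact hne (key L (Finset.mem_filter.mp hL).1 h0))]
    rw [stufList_letters_apply q v hv s, hlen]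
    simp
  · rw [if_neg (fun h => hlen h.1)]
    apply Finset.sum_eq_zero
    intro L hL
    rw [Finset.mem_filter] at hL
    by_contra h0
    have := key L hL.1 h0
    rw [this] at hL
    simp only [List.length_map] at hL
    exact hlen hL.2

lemma weight_eq_zero_iff {v : Word} : weight v = 0 ↔ v = [] := by
  cases v with
  | nil => simp [weight]
  | cons a v =>
    rw [weight_cons]
    have := a.pos
    constructor
    · intro h; omega
    · intro h; simp at h

lemma mem_wordsOfWeight : ∀ (n : ℕ) (w : Word), w ∈ wordsOfWeight n ↔ weight w = n := by
  intro n
  induction n using Nat.strong_induction_on with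
  | _ n ih =>
    intro w
    match n with
    | 0 =>
      rw [wordsOfWeight]
      simp [weight_eq_zero_iff]
    | (n+1) =>
      rw [wordsOfWeight]
      simp only [Finset.mem_biUnion, Finset.mem_attach, Finset.mem_image, true_and]
      constructor
      · rintro ⟨i, w', hw', rfl⟩
        have hi' : i.1 < n + 1 := Finset.mem_range.mp i.2
        have hwt : weight w' = i.1 := (ih i.1 hi' w').mp hw'
        rw [weight_cons, hwt, PNat.toPNat'_coe (by omega)]
        omega
      · intro hw
        cases w with
        | nil => simp [weight] at hw
        | cons a w' =>
          rw [weight_cons] at hw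
          have ha := a.pos
          have hi' : weight w' < n + 1 := by omega
          refine ⟨⟨weight w', Finset.mem_range.mpr hi'⟩, w', (ih _ hi' w').mpr rfl, ?_⟩
          have : (n + 1 - weight w').toPNat' = a := by
            apply PNat.coe_injective
            rw [PNat.toPNat'_coe (by omega)]
            omega
          rw [this]

lemma mem_wordsUpTo (n : ℕ) (w : Word) : w ∈ wordsUpTo n ↔ weight w ≤ n := by
  unfold wordsUpTo
  simp only [Finset.mem_biUnion, Finset.mem_range, mem_wordsOfWeight]
  constructor
  · rintro ⟨i, hi, rfl⟩; omega
  · intro h; exact ⟨weight w, by omega, rfl⟩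

end Aux

/-- On a letter `y_s`,
`π₁(y_s) = y_s + Σ_{l≥2} ((-q)^{l-1}/l) Σ_{j_1+⋯+j_l=s, j_i≥1} y_{j_1} ⋯ y_{j_l}`. -/
theorem qpi1_letter [Algebra ℚ R] (q : R) (s : ℕ+) :
    qpi1 q [s] =
      Finsupp.single [s] (1 : R) +
        ∑ l ∈ Finset.Icc 2 (s : ℕ),
          ((1 : ℚ) / l) • ((-q) ^ (l - 1) •
            ∑ w ∈ (wordsOfWeight (s : ℕ)).filter (fun w => w.length = l),
              Finsupp.single w (1 : R)) := by
  have hs1 : 1 ≤ (s : ℕ) := s.pos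
  have hws : weight ([s] : Word) = (s : ℕ) := by simp [weight]
  have hcoef : ∀ v : Word,
      (∑ n ∈ Finset.Icc 1 (s : ℕ), ((-1 : ℚ) ^ (n - 1) / n) •
        ∑ L ∈ (splits v).filter (fun L => L.length = n), (stufList q L) [s])
      = if weight v = (s : ℕ) then
          ((1 : ℚ) / (v.length : ℚ)) • ((-q) ^ (v.length - 1)) else 0 := by
    intro v
    by_cases hwv : weight v = (s : ℕ)
    · have hv : v ≠ [] := by
        intro h; subst h; simp [weight] at hwv; omega
      have hl1 : 1 ≤ v.length := List.length_pos_iff.mpr hv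
      have hl2 : v.length ≤ (s : ℕ) := hwv ▸ length_le_weight v
      rw [if_pos hwv]
      rw [Finset.sum_eq_single_of_mem v.length (Finset.mem_Icc.mpr ⟨hl1, hl2⟩)]
      · rw [sum_splits_stufList q s v v.length hl1, if_pos ⟨rfl, hwv⟩]
        have hq : ((-1:ℚ)^(v.length-1)/(v.length : ℚ))
            = ((1:ℚ)/(v.length : ℚ)) * ((-1:ℚ)^(v.length-1)) := by ring
        rw [hq, mul_smul]
        congr 1
        rw [Algebra.smul_def, map_pow, map_neg, map_one, ← neg_pow]
      · intro n hn hne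
        rw [sum_splits_stufList q s v n (Finset.mem_Icc.mp hn).1,
          if_neg (fun h => hne h.1.symm), smul_zero]
    · rw [if_neg hwv]
      apply Finset.sum_eq_zero
      intro n hn
      rw [sum_splits_stufList q s v n (Finset.mem_Icc.mp hn).1,
        if_neg (fun h => hwv h.2), smul_zero]
  rw [qpi1, hws]
  rw [Finset.sum_congr rfl (fun v _ => by rw [hcoef v])]
  have hsub : wordsOfWeight (s : ℕ) ⊆ wordsUpTo (s : ℕ) := fun v hv =>
    (mem_wordsUpTo _ _).mpr (le_of_eq ((mem_wordsOfWeight _ _).mp hv))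
  rw [← Finset.sum_subset hsub (fun v _ hv => by
    rw [if_neg (fun h => hv ((mem_wordsOfWeight _ _).mpr h)), Finsupp.single_zero])]
  rw [Finset.sum_congr rfl (fun v hv => by
    rw [if_pos ((mem_wordsOfWeight _ _).mp hv)])]
  have hmaps : ∀ v ∈ wordsOfWeight (s : ℕ), v.length ∈ Finset.Icc 1 (s : ℕ) := by
    intro v hv
    have hw : weight v = (s : ℕ) := (mem_wordsOfWeight _ _).mp hv
    have hv' : v ≠ [] := by intro h; subst h; simp [weight] at hw; omega
    exact Finset.mem_Icc.mpr ⟨List.length_pos_iff.mpr hv', hw ▸ length_le_weight v⟩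
  rw [← Finset.sum_fiberwise_of_maps_to hmaps
    (fun v => Finsupp.single v (((1 : ℚ) / (v.length : ℚ)) • ((-q) ^ (v.length - 1))))]
  have hinner : ∀ l ∈ Finset.Icc 1 (s : ℕ),
      (∑ v ∈ (wordsOfWeight (s : ℕ)).filter (fun v => v.length = l),
        Finsupp.single v (((1 : ℚ) / (v.length : ℚ)) • ((-q) ^ (v.length - 1))))
      = ∑ v ∈ (wordsOfWeight (s : ℕ)).filter (fun v => v.length = l),
        Finsupp.single v (((1 : ℚ) / (l : ℚ)) • ((-q) ^ (l - 1))) := by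
    intro l _
    apply Finset.sum_congr rfl
    intro v hv
    rw [(Finset.mem_filter.mp hv).2]
  rw [Finset.sum_congr rfl hinner]
  have hicc : Finset.Icc 1 (s : ℕ) = insert 1 (Finset.Icc 2 (s : ℕ)) := by
    ext x
    simp only [Finset.mem_Icc, Finset.mem_insert]
    omega
  rw [hicc, Finset.sum_insert (by simp)]
  congr 1
  · have hfilter1 : (wordsOfWeight (s : ℕ)).filter (fun v => v.length = 1) = {[s]} := by
      ext v
      simp only [Finset.mem_filter, mem_wordsOfWeight, Finset.mem_singleton]
      constructor
      · rintro ⟨hw, hl⟩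
        obtain ⟨a, rfl⟩ := List.length_eq_one_iff.mp hl
        have ha : (a : ℕ) = (s : ℕ) := by simpa [weight] using hw
        rw [PNat.coe_injective ha]
      · rintro rfl
        simp [weight]
    rw [hfilter1, Finset.sum_singleton]
    norm_num
  · apply Finset.sum_congr rfl
    intro l _
    rw [Finset.smul_sum, Finset.smul_sum]
    apply Finset.sum_congr rfl
    intro v _
    rw [Finsupp.smul_single, Finsupp.smul_single]
    congr 1
    rw [smul_eq_mul, mul_one]
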